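/- Suppose S is a ℤ≥0-valued random variable and η > 0 with ∑_{n=1}^∞ P(S=n) H_n/η = ∞ (equivalently E[log(S+1)] = ∞). Then ∫_0^∞ [1 − E((1 − e^{−ητ})^S)] dτ = ∞. -/

import Mathlib

open MeasureTheory

private lemma H_eq_harmonic (n : ℕ) :
    (∑ k ∈ Finset.Icc 1 n, (1 : ℝ) / k) = (harmonic n : ℝ) := by
  rw [harmonic_eq_sum_Icc]
  push_cast
  simp [one_div]

private lemma tsum_ofReal_eq_top {f : ℕ → ℝ} (hf : ∀ n, 0 ≤ f n) (h : ¬ Summable f) :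
    ∑' n, ENNReal.ofReal (f n) = ⊤ := by
  by_contra hne
  apply h
  have h1 : ∀ n, ENNReal.ofReal (f n) = ((f n).toNNReal : ENNReal) := fun n => rfl
  simp_rw [h1] at hne
  have := ENNReal.tsum_coe_ne_top_iff_summable.mp hne
  have h2 : f = fun n => ((f n).toNNReal : ℝ) := by
    funext n; rw [Real.coe_toNNReal _ (hf n)]
  rw [h2]
  exact_mod_cast NNReal.summable_coe.mpr this

/-- Suppose `S` is a `ℤ≥0`-valued random variable (with PMF `p`) and `η > 0` with
`∑_{n=1}^∞ P(S=n) H_n / η = ∞` (equivalently `E[log(S+1)] = ∞`), where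
`H_n = ∑_{k=1}^n 1/k`.  Then `∫_0^∞ [1 − E((1 − e^{−ητ})^S)] dτ = ∞`. -/
theorem integral_one_sub_pgf_eq_top (p : ℕ → ℝ) (hpnonneg : ∀ n, 0 ≤ p n)
    (hpsum : ∑' n, p n = 1) (η : ℝ) (hη : 0 < η)
    (hdiv : ¬ Summable (fun n : ℕ => p n * (∑ k ∈ Finset.Icc 1 n, (1 : ℝ) / k) / η)) :
    ∫⁻ τ in Set.Ioi (0 : ℝ),
        ENNReal.ofReal (1 - ∑' n : ℕ, p n * (1 - Real.exp (-η * τ)) ^ n) = ⊤ := by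
  -- Summability of p
  have hS : Summable p := by
    by_contra h
    rw [tsum_eq_zero_of_not_summable h] at hpsum
    norm_num at hpsum
  set H : ℕ → ℝ := fun n => ∑ k ∈ Finset.Icc 1 n, (1 : ℝ) / k with hH
  have hHnonneg : ∀ n, 0 ≤ H n := fun n =>
    Finset.sum_nonneg fun k _ => by positivity
  -- constants
  have hlog2 : (0:ℝ) < Real.log 2 := Real.log_pos (by norm_num)
  set c : ℝ := 1 - Real.exp (-(1/2)) with hc
  have hcpos : 0 < c := by
    have h1 : Real.exp (-(1/2)) < 1 := Real.exp_lt_one_iff.mpr (by norm_num)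
    rw [hc]; linarith
  set a : ℝ := Real.log 2 / (1 + Real.log 2) with ha
  have hapos : 0 < a := by positivity
  set d : ℝ := c * a with hd
  have hdpos : 0 < d := by positivity
  -- key inequality: a * H n ≤ log (n+1)
  have hkey : ∀ n : ℕ, 1 ≤ n → a * H n ≤ Real.log (n + 1) := by
    intro n hn
    have hHle : H n ≤ 1 + Real.log n := by
      rw [hH]; simp only [H_eq_harmonic]; exact harmonic_le_one_add_log n
    have hlog_mono : Real.log n ≤ Real.log (n + 1) :=
      Real.log_le_log (by exact_mod_cast hn) (by linarith)
    have h2le : Real.log 2 ≤ Real.log (n + 1) := by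
      apply Real.log_le_log (by norm_num)
      have : (1:ℝ) ≤ n := by exact_mod_cast hn
      linarith
    have hHle2 : H n ≤ Real.log (n + 1) * (1 + Real.log 2) / Real.log 2 := by
      rw [div_eq_mul_inv, mul_comm (Real.log (n+1)), mul_assoc]
      have h1 : (1:ℝ) ≤ Real.log (n + 1) * (Real.log 2)⁻¹ := by
        rw [← div_eq_mul_inv, le_div_iff₀ hlog2]; linarith
      calc H n ≤ 1 + Real.log n := hHle
        _ ≤ Real.log (n+1) * (Real.log 2)⁻¹ + Real.log (n+1) := by linarith
        _ = (1 + Real.log 2) * (Real.log (n+1) * (Real.log 2)⁻¹) := by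
            field_simp
    rw [ha, div_mul_eq_mul_div, div_le_iff₀ (by positivity), mul_comm (Real.log (n+1))]
    calc Real.log 2 * H n ≤ Real.log 2 * (Real.log (n + 1) * (1 + Real.log 2) / Real.log 2) := by
          exact mul_le_mul_of_nonneg_left hHle2 hlog2.le
      _ = Real.log (n + 1) * (1 + Real.log 2) := by field_simp
      _ = (1 + Real.log 2) * Real.log (n + 1) := by ring
  -- rewrite the integrand as a tsum
  have hrw : ∀ τ : ℝ, τ ∈ Set.Ioi (0:ℝ) →
      ENNReal.ofReal (1 - ∑' n : ℕ, p n * (1 - Real.exp (-η * τ)) ^ n)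
        = ∑' n : ℕ, ENNReal.ofReal (p n * (1 - (1 - Real.exp (-η * τ)) ^ n)) := by
    intro τ hτ
    rw [Set.mem_Ioi] at hτ
    set x : ℝ := 1 - Real.exp (-η * τ) with hx
    have hx0 : 0 ≤ x := by
      have : Real.exp (-η * τ) ≤ 1 := Real.exp_le_one_iff.mpr (by nlinarith)
      linarith
    have hx1 : x < 1 := by
      have : 0 < Real.exp (-η * τ) := Real.exp_pos _
      linarith
    have hsum2 : Summable (fun n => p n * x ^ n) := by
      apply Summable.of_nonneg_of_le
        (fun n => mul_nonneg (hpnonneg n) (pow_nonneg hx0 n)) (fun n => ?_) hS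
      calc p n * x ^ n ≤ p n * 1 := by
            apply mul_le_mul_of_nonneg_left _ (hpnonneg n)
            exact pow_le_one₀ hx0 hx1.le
        _ = p n := mul_one _
    have h1 : (1:ℝ) - ∑' n, p n * x ^ n = ∑' n, p n * (1 - x ^ n) := by
      calc (1:ℝ) - ∑' n, p n * x ^ n = (∑' n, p n) - ∑' n, p n * x ^ n := by rw [hpsum]
        _ = ∑' n, (p n - p n * x ^ n) := (Summable.tsum_sub hS hsum2).symm
        _ = ∑' n, p n * (1 - x ^ n) := tsum_congr fun n => by ring
    rw [h1, ENNReal.ofReal_tsum_of_nonneg]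
    · intro n
      have : x ^ n ≤ 1 := pow_le_one₀ hx0 hx1.le
      have := hpnonneg n
      nlinarith
    · exact (hS.sub hsum2).congr (fun n => by ring)
  rw [setLIntegral_congr_fun measurableSet_Ioi hrw]
  rw [lintegral_tsum (fun n => Measurable.aemeasurable (by fun_prop))]
  rw [eq_top_iff]
  calc (⊤ : ENNReal) = ∑' n, ENNReal.ofReal (d * (p n * H n / η)) := by
        refine (tsum_ofReal_eq_top (fun n => mul_nonneg hdpos.le (div_nonneg (mul_nonneg (hpnonneg n) (hHnonneg n)) hη.le)) ?_).symm
        intro hcon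
        apply hdiv
        have := hcon.mul_left d⁻¹
        refine this.congr fun n => ?_
        field_simp [hH]
        rfl
    _ ≤ ∑' n, ∫⁻ τ in Set.Ioi (0:ℝ),
          ENNReal.ofReal (p n * (1 - (1 - Real.exp (-η * τ)) ^ n)) := by
        apply ENNReal.tsum_le_tsum
        intro n
        rcases Nat.eq_zero_or_pos n with hn | hn
        · subst hn
          have h0 : H 0 = 0 := by simp [hH]
          rw [h0]
          simp
        -- n ≥ 1
        set L : ℝ := Real.log (n + 1) / η with hL
        have hLpos : 0 < L := by
          apply div_pos _ hη
          apply Real.log_pos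
          have : (1:ℝ) ≤ n := by exact_mod_cast hn
          linarith
        calc ENNReal.ofReal (d * (p n * H n / η))
            ≤ ENNReal.ofReal (p n * c * L) := by
              apply ENNReal.ofReal_le_ofReal
              have h1 : a * H n ≤ Real.log (n+1) := hkey n hn
              have hp := hpnonneg n
              rw [hd, hL]
              have heq : c * a * (p n * H n / η) = p n * c * ((a * H n) / η) := by ring
              rw [heq]
              refine mul_le_mul_of_nonneg_left ?_ (mul_nonneg hp hcpos.le)
              exact div_le_div_of_nonneg_right h1 hη.le
          _ = ENNReal.ofReal (p n * c) * volume (Set.Ioc (0:ℝ) L) := by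
              rw [Real.volume_Ioc, ← ENNReal.ofReal_mul (mul_nonneg (hpnonneg n) hcpos.le)]
              norm_num
          _ = ∫⁻ _ in Set.Ioc (0:ℝ) L, ENNReal.ofReal (p n * c) := by
              rw [setLIntegral_const]
          _ ≤ ∫⁻ τ in Set.Ioc (0:ℝ) L,
                ENNReal.ofReal (p n * (1 - (1 - Real.exp (-η * τ)) ^ n)) := by
              apply setLIntegral_mono (by fun_prop)
              intro τ hτ
              apply ENNReal.ofReal_le_ofReal
              apply mul_le_mul_of_nonneg_left _ (hpnonneg n)
              -- c ≤ 1 - (1 - exp(-ητ))^n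
              have hτ1 : 0 < τ := hτ.1
              have hτ2 : τ ≤ L := hτ.2
              have hbase0 : (0:ℝ) ≤ 1 - Real.exp (-η * τ) := by
                have : Real.exp (-η * τ) ≤ 1 := Real.exp_le_one_iff.mpr (by nlinarith)
                linarith
              have hexp_ge : ((n:ℝ) + 1)⁻¹ ≤ Real.exp (-η * τ) := by
                rw [show ((n:ℝ)+1)⁻¹ = Real.exp (-Real.log (n+1)) by
                  rw [Real.exp_neg, Real.exp_log (by positivity)]]
                apply Real.exp_le_exp.mpr
                have hητ : η * τ ≤ Real.log (n+1) := by
                  calc η * τ ≤ η * L := by nlinarith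
                    _ = Real.log (n+1) := by rw [hL]; field_simp
                linarith
              have hbase_le : 1 - Real.exp (-η * τ) ≤ 1 - ((n:ℝ)+1)⁻¹ := by linarith
              have hstep : (1 - ((n:ℝ)+1)⁻¹) ^ n ≤ Real.exp (-(1/2)) := by
                have h1 : (1 - ((n:ℝ)+1)⁻¹) ≤ Real.exp (-((n:ℝ)+1)⁻¹) := by
                  have := Real.add_one_le_exp (-((n:ℝ)+1)⁻¹)
                  linarith
                have h0 : (0:ℝ) ≤ 1 - ((n:ℝ)+1)⁻¹ := by
                  have : ((n:ℝ)+1)⁻¹ ≤ 1 := by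
                    rw [inv_le_one_iff₀]; right; have : (0:ℝ) ≤ n := n.cast_nonneg; linarith
                  linarith
                calc (1 - ((n:ℝ)+1)⁻¹) ^ n ≤ (Real.exp (-((n:ℝ)+1)⁻¹)) ^ n :=
                      pow_le_pow_left₀ h0 h1 n
                  _ = Real.exp (-(n * ((n:ℝ)+1)⁻¹)) := by
                      rw [← Real.exp_nat_mul]; ring_nf
                  _ ≤ Real.exp (-(1/2)) := by
                      apply Real.exp_le_exp.mpr
                      rw [neg_le_neg_iff]
                      have hn1 : (1:ℝ) ≤ n := by exact_mod_cast hn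
                      rw [show (n:ℝ) * ((n:ℝ)+1)⁻¹ = n/((n:ℝ)+1) from (div_eq_mul_inv _ _).symm,
                        le_div_iff₀ (by positivity)]
                      linarith
              have hpow : (1 - Real.exp (-η * τ)) ^ n ≤ Real.exp (-(1/2)) :=
                le_trans (pow_le_pow_left₀ hbase0 hbase_le n) hstep
              rw [hc]; linarith
          _ ≤ ∫⁻ τ in Set.Ioi (0:ℝ),
                ENNReal.ofReal (p n * (1 - (1 - Real.exp (-η * τ)) ^ n)) :=
              lintegral_mono_set Set.Ioc_subset_Ioi_self
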